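/- Let $l$ be a finite-dimensional separable $k$-algebra with trace and Casimir element $\sigma$, let $U$ be a right $l$-module and $W$ a left $l$-module, both finite-dimensional. The natural map $c_{W,U}: W^* \otimes_l U^* \to (U \otimes_l W)^*$, $\phi \otimes \theta \mapsto (u \otimes w \mapsto \theta(u\sigma')\phi(\sigma'' w))$, is well-defined and compatible with the unit isomorphism: the composition $W^* \otimes_l l^* \xrightarrow{c_{W,l}} (l \otimes_l W)^* = W^*$ equals the composition $W^* \otimes_l l^* \xrightarrow{1 \otimes \pi} W^* \otimes_l l = W^*$. -/
import Mathlib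


open TensorProduct MulOpposite

section Prelim

variable (k l : Type) [Field k] [Ring l] [Algebra k l]
variable (U : Type) [AddCommGroup U] [Module k U] [Module lᵐᵒᵖ U] [IsScalarTower k lᵐᵒᵖ U]
variable (W : Type) [AddCommGroup W] [Module k W] [Module l W] [IsScalarTower k l W]

/-- For a right `l`-module `U` and `u ∈ U`, the `k`-linear map `l → U`, `x ↦ u · x`. -/
def actRight (u : U) : l →ₗ[k] U where
  toFun x := op x • u
  map_add' x y := by simp [op_add, add_smul]
  map_smul' c x := by simp [op_smul, smul_assoc]

/-- For a left `l`-module `W` and `w ∈ W`, the `k`-linear map `l → W`, `y ↦ y · w`. -/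
def actLeft (w : W) : l →ₗ[k] W where
  toFun y := y • w
  map_add' x y := by simp [add_smul]
  map_smul' c x := by simp [smul_assoc]

/-- The value `θ(u σ') φ(σ'' w)` of the map
`c_{W,U} : W^* ⊗_l U^* → (U ⊗_l W)^*` on `(φ ⊗ θ, u ⊗ w)`, obtained by contracting
against the Casimir element `σ`. -/
noncomputable def cVal (σ : l ⊗[k] l)
    (φ : W →ₗ[k] k) (θ : U →ₗ[k] k) (u : U) (w : W) : k :=
  (TensorProduct.lift
    ((LinearMap.mul k k).compl₁₂ (θ ∘ₗ actRight k l U u) (φ ∘ₗ actLeft k l W w))) σ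

end Prelim

section Aux

set_option linter.unusedSectionVars false

variable (k l : Type) [Field k] [Ring l] [Algebra k l] [FiniteDimensional k l]
variable (Tr : l →ₗ[k] k)

/-- The contraction `l ⊗ l → l`, `x ⊗ y ↦ Tr(z x) • y`. -/
noncomputable def gmap (z : l) : l ⊗[k] l →ₗ[k] l :=
  (TensorProduct.lid k l).toLinearMap ∘ₗ
    LinearMap.rTensor l (((LinearMap.mul k l).compr₂ Tr) z)

lemma gmap_tmul (z x y : l) : gmap k l Tr z (x ⊗ₜ y) = Tr (z * x) • y := by
  simp [gmap]

lemma gmap_injective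
    (hTrSymm : ∀ a b : l, Tr (a * b) = Tr (b * a))
    (hTrNondeg : ∀ a : l, (∀ b : l, Tr (a * b) = 0) → a = 0)
    (ρ : l ⊗[k] l) (h : ∀ z, gmap k l Tr z ρ = 0) : ρ = 0 := by
  set τ : l →ₗ[k] Module.Dual k l := ((LinearMap.mul k l).compr₂ Tr).flip with hτ
  have hτ_apply : ∀ x z : l, τ x z = Tr (z * x) := fun x z => rfl
  have hτinj : Function.Injective τ := by
    rw [← LinearMap.ker_eq_bot, LinearMap.ker_eq_bot']
    intro x hx
    refine hTrNondeg x (fun b => ?_)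
    have := congrFun (congrArg DFunLike.coe hx) b
    simpa [hτ_apply, hTrSymm x b] using this
  have hdth : Function.Injective (dualTensorHom k l l) := by
    intro x y hxy
    have b := Module.Free.chooseBasis k l
    refine (dualTensorHomEquivOfBasis (N := l) b).injective ?_
    rw [dualTensorHomEquivOfBasis_apply, dualTensorHomEquivOfBasis_apply, hxy]
  set Φ : l ⊗[k] l →ₗ[k] (l →ₗ[k] l) :=
    dualTensorHom k l l ∘ₗ LinearMap.rTensor l τ with hΦ
  have hΦinj : Function.Injective Φ :=
    hdth.comp (Module.Flat.rTensor_preserves_injective_linearMap τ hτinj)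
  have hΦg : ∀ (ρ : l ⊗[k] l) (z : l), Φ ρ z = gmap k l Tr z ρ := by
    intro ρ z
    induction ρ using TensorProduct.induction_on with
    | zero => simp
    | tmul x y => simp [hΦ, gmap_tmul, hτ_apply]
    | add p q hp hq => simp [hp, hq]
  have : Φ ρ = 0 := by
    ext z
    simp [hΦg, h z]
  simpa using hΦinj (this.trans (map_zero Φ).symm)

variable
    (hTrSymm : ∀ a b : l, Tr (a * b) = Tr (b * a))
    (hTrNondeg : ∀ a : l, (∀ b : l, Tr (a * b) = 0) → a = 0)
    (σ : l ⊗[k] l)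
    (hCasimir : ∀ z : l, gmap k l Tr z σ = z)

include hTrSymm hTrNondeg hCasimir

lemma casimir_key1 (a : l) :
    LinearMap.rTensor l (LinearMap.mulRight k a) σ
      = LinearMap.lTensor l (LinearMap.mulLeft k a) σ := by
  rw [← sub_eq_zero]
  refine gmap_injective k l Tr hTrSymm hTrNondeg _ (fun z => ?_)
  rw [map_sub]
  have h1 : gmap k l Tr z ∘ₗ LinearMap.rTensor l (LinearMap.mulRight k a)
      = gmap k l Tr (a * z) := by
    apply TensorProduct.ext'
    intro x y
    simp only [LinearMap.comp_apply, LinearMap.rTensor_tmul, LinearMap.mulRight_apply,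
      gmap_tmul]
    rw [← mul_assoc, hTrSymm (z * x) a, ← mul_assoc]
  have h2 : gmap k l Tr z ∘ₗ LinearMap.lTensor l (LinearMap.mulLeft k a)
      = LinearMap.mulLeft k a ∘ₗ gmap k l Tr z := by
    apply TensorProduct.ext'
    intro x y
    simp [gmap_tmul, mul_smul_comm]
  have e1 := congrFun (congrArg DFunLike.coe h1) σ
  have e2 := congrFun (congrArg DFunLike.coe h2) σ
  simp only [LinearMap.comp_apply] at e1 e2
  rw [e1, e2, hCasimir, hCasimir, LinearMap.mulLeft_apply, sub_self]

lemma casimir_key2 (a : l) :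
    LinearMap.rTensor l (LinearMap.mulLeft k a) σ
      = LinearMap.lTensor l (LinearMap.mulRight k a) σ := by
  rw [← sub_eq_zero]
  refine gmap_injective k l Tr hTrSymm hTrNondeg _ (fun z => ?_)
  rw [map_sub]
  have h1 : gmap k l Tr z ∘ₗ LinearMap.rTensor l (LinearMap.mulLeft k a)
      = gmap k l Tr (z * a) := by
    apply TensorProduct.ext'
    intro x y
    simp only [LinearMap.comp_apply, LinearMap.rTensor_tmul, LinearMap.mulLeft_apply,
      gmap_tmul]
    rw [← mul_assoc]
  have h2 : gmap k l Tr z ∘ₗ LinearMap.lTensor l (LinearMap.mulRight k a)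
      = LinearMap.mulRight k a ∘ₗ gmap k l Tr z := by
    apply TensorProduct.ext'
    intro x y
    simp [gmap_tmul, smul_mul_assoc]
  have e1 := congrFun (congrArg DFunLike.coe h1) σ
  have e2 := congrFun (congrArg DFunLike.coe h2) σ
  simp only [LinearMap.comp_apply] at e1 e2
  rw [e1, e2, hCasimir, hCasimir, LinearMap.mulRight_apply, sub_self]

lemma casimir_comm : (TensorProduct.comm k l l) σ = σ := by
  rw [← sub_eq_zero]
  refine gmap_injective k l Tr hTrSymm hTrNondeg _ (fun z => ?_)
  rw [map_sub, hCasimir, sub_eq_zero]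
  -- show gmap z (comm σ) = z
  rw [← sub_eq_zero]
  refine hTrNondeg _ (fun w => ?_)
  rw [sub_mul, map_sub, sub_eq_zero]
  have key : ∀ ρ : l ⊗[k] l,
      Tr (gmap k l Tr z ((TensorProduct.comm k l l) ρ) * w)
        = Tr (z * gmap k l Tr w ρ) := by
    intro ρ
    induction ρ using TensorProduct.induction_on with
    | zero => simp
    | tmul x y =>
        simp only [TensorProduct.comm_tmul, gmap_tmul, smul_mul_assoc, map_smul,
          mul_smul_comm, smul_eq_mul]
        rw [hTrSymm x w, mul_comm]
    | add p q hp hq => simp only [map_add, add_mul, mul_add, hp, hq]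
  rw [key σ, hCasimir]

end Aux

/-!
STATEMENT 2: Let `l` be a finite-dimensional separable `k`-algebra with trace and Casimir
element `σ`, let `U` be a (finite-dimensional) right `l`-module and `W` a
(finite-dimensional) left `l`-module.  The natural map
`c_{W,U} : W^* ⊗_l U^* → (U ⊗_l W)^*`, `φ ⊗ θ ↦ (u ⊗ w ↦ θ(uσ') φ(σ'' w))`,
is well-defined (expressed element-wise: the value `cVal σ φ θ u w` is balanced in the
middle variable both for the tensor `φ ⊗ θ` over `l` and for the argument `u ⊗ w` over
`l`), and is compatible with the unit isomorphism: the composite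
`W^* ⊗_l l^* → (l ⊗_l W)^* = W^*` equals `1 ⊗ π : W^* ⊗_l l^* → W^* ⊗_l l = W^*`,
i.e. element-wise `cVal σ φ θ 1 w = φ (π(θ) • w)` for `θ ∈ l^*`.
Here `(φ·a)(w) = φ(a•w)`, `(a·θ)(u) = θ(u·a)`, and `π(θ) = σ' θ(σ'')`.
-/
theorem cMap_welldefined_and_unit_compatible
    (k l : Type) [Field k] [Ring l] [Algebra k l] [FiniteDimensional k l]
    (U : Type) [AddCommGroup U] [Module k U] [Module lᵐᵒᵖ U] [IsScalarTower k lᵐᵒᵖ U]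
      [FiniteDimensional k U]
    (W : Type) [AddCommGroup W] [Module k W] [Module l W] [IsScalarTower k l W]
      [FiniteDimensional k W]
    (Tr : l →ₗ[k] k)
    (hTrSymm : ∀ a b : l, Tr (a * b) = Tr (b * a))
    (hTrNondeg : ∀ a : l, (∀ b : l, Tr (a * b) = 0) → a = 0)
    (σ : l ⊗[k] l)
    (hCasimir : ∀ z : l,
      (TensorProduct.lid k l)
        ((LinearMap.rTensor l (((LinearMap.mul k l).compr₂ Tr) z)) σ) = z) :
    -- (a) well-definedness on `W^* ⊗_l U^*`: balancedness `φ·a ⊗ θ ∼ φ ⊗ a·θ`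
    (∀ (a : l) (φ : W →ₗ[k] k) (θ : U →ₗ[k] k) (u : U) (w : W),
        cVal k l U W σ (φ ∘ₗ (Algebra.lsmul k k W a : Module.End k W)) θ u w
          = cVal k l U W σ φ (θ ∘ₗ (Algebra.lsmul k k U (op a) : Module.End k U)) u w) ∧
    -- (a') well-definedness of the functional on `U ⊗_l W`: `u·a ⊗ w ∼ u ⊗ a·w`
    (∀ (a : l) (φ : W →ₗ[k] k) (θ : U →ₗ[k] k) (u : U) (w : W),
        cVal k l U W σ φ θ (op a • u) w = cVal k l U W σ φ θ u (a • w)) ∧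
    -- (b) compatibility with the unit isomorphism (taking `U = l`)
    (∀ (φ : W →ₗ[k] k) (θ : l →ₗ[k] k) (w : W),
        cVal k l l W σ φ θ (1 : l) w
          = φ (((TensorProduct.rid k l) ((LinearMap.lTensor l θ) σ)) • w)) := by
  have hCas : ∀ z : l, gmap k l Tr z σ = z := by
    intro z
    simpa [gmap] using hCasimir z
  refine ⟨?_, ?_, ?_⟩
  · -- (a)
    intro a φ θ u w
    have h1 : TensorProduct.lift ((LinearMap.mul k k).compl₁₂ (θ ∘ₗ actRight k l U u)
          ((φ ∘ₗ (Algebra.lsmul k k W a : Module.End k W)) ∘ₗ actLeft k l W w))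
        = TensorProduct.lift ((LinearMap.mul k k).compl₁₂ (θ ∘ₗ actRight k l U u)
          (φ ∘ₗ actLeft k l W w)) ∘ₗ LinearMap.lTensor l (LinearMap.mulLeft k a) := by
      apply TensorProduct.ext'
      intro x y
      simp [actLeft, actRight, mul_smul]
    have h2 : TensorProduct.lift ((LinearMap.mul k k).compl₁₂
          ((θ ∘ₗ (Algebra.lsmul k k U (op a) : Module.End k U)) ∘ₗ actRight k l U u)
          (φ ∘ₗ actLeft k l W w))
        = TensorProduct.lift ((LinearMap.mul k k).compl₁₂ (θ ∘ₗ actRight k l U u)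
          (φ ∘ₗ actLeft k l W w)) ∘ₗ LinearMap.rTensor l (LinearMap.mulRight k a) := by
      apply TensorProduct.ext'
      intro x y
      simp [actLeft, actRight, op_mul, mul_smul]
    simp only [cVal, h1, h2, LinearMap.comp_apply]
    rw [casimir_key1 k l Tr hTrSymm hTrNondeg σ hCas a]
  · -- (a')
    intro a φ θ u w
    have h1 : TensorProduct.lift ((LinearMap.mul k k).compl₁₂
          (θ ∘ₗ actRight k l U (op a • u)) (φ ∘ₗ actLeft k l W w))
        = TensorProduct.lift ((LinearMap.mul k k).compl₁₂ (θ ∘ₗ actRight k l U u)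
          (φ ∘ₗ actLeft k l W w)) ∘ₗ LinearMap.rTensor l (LinearMap.mulLeft k a) := by
      apply TensorProduct.ext'
      intro x y
      simp [actLeft, actRight, op_mul, mul_smul]
    have h2 : TensorProduct.lift ((LinearMap.mul k k).compl₁₂
          (θ ∘ₗ actRight k l U u) (φ ∘ₗ actLeft k l W (a • w)))
        = TensorProduct.lift ((LinearMap.mul k k).compl₁₂ (θ ∘ₗ actRight k l U u)
          (φ ∘ₗ actLeft k l W w)) ∘ₗ LinearMap.lTensor l (LinearMap.mulRight k a) := by
      apply TensorProduct.ext'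
      intro x y
      simp [actLeft, actRight, mul_smul]
    simp only [cVal, h1, h2, LinearMap.comp_apply]
    rw [casimir_key2 k l Tr hTrSymm hTrNondeg σ hCas a]
  · -- (b)
    intro φ θ w
    have h : TensorProduct.lift ((LinearMap.mul k k).compl₁₂
          (θ ∘ₗ actRight k l l (1 : l)) (φ ∘ₗ actLeft k l W w))
        = ((φ ∘ₗ actLeft k l W w) ∘ₗ (TensorProduct.rid k l).toLinearMap
            ∘ₗ LinearMap.lTensor l θ) ∘ₗ (TensorProduct.comm k l l).toLinearMap := by
      apply TensorProduct.ext'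
      intro x y
      simp [actLeft, actRight, op_smul_eq_mul, smul_assoc, mul_comm]
    simp only [cVal, h, LinearMap.comp_apply, LinearEquiv.coe_coe]
    rw [casimir_comm k l Tr hTrSymm hTrNondeg σ hCas]
    simp [actLeft]
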